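/- Let (M, μ) be a measure space with 0 < μ(M) < ∞ and let H : M → ℝ be square-integrable. Set c(K) = (1/μ(M))·∫_M K dμ for square-integrable K. Then −3·∫_M H² dμ ≤ (4·c(H)² − 3·c(H²))·μ(M) ≤ ∫_M H² dμ. Equality holds on the left if and only if ∫_M H dμ = 0, and equality holds on the right if and only if H is constant μ-almost everywhere. -/

import Mathlib

open MeasureTheory

theorem helicity_bounds_by_L2_norm
    {M : Type*} [MeasurableSpace M] (μ : Measure M)
    (hpos : 0 < μ Set.univ) (hfin : μ Set.univ < ⊤)
    (H : M → ℝ) (hH : MemLp H 2 μ)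
    (c : (M → ℝ) → ℝ) (hc : ∀ K : M → ℝ, c K = ((μ Set.univ).toReal)⁻¹ * ∫ x, K x ∂μ) :
    (-3 * ∫ x, (H x) ^ 2 ∂μ) ≤ (4 * (c H) ^ 2 - 3 * c (fun x => (H x) ^ 2)) * (μ Set.univ).toReal ∧
    (4 * (c H) ^ 2 - 3 * c (fun x => (H x) ^ 2)) * (μ Set.univ).toReal ≤ ∫ x, (H x) ^ 2 ∂μ ∧
    ((-3 * ∫ x, (H x) ^ 2 ∂μ)
        = (4 * (c H) ^ 2 - 3 * c (fun x => (H x) ^ 2)) * (μ Set.univ).toReal ↔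
      (∫ x, H x ∂μ) = 0) ∧
    ((4 * (c H) ^ 2 - 3 * c (fun x => (H x) ^ 2)) * (μ Set.univ).toReal
        = ∫ x, (H x) ^ 2 ∂μ ↔
      ∃ a : ℝ, H =ᵐ[μ] fun _ => a) := by
  haveI : IsFiniteMeasure μ := ⟨hfin⟩
  set V : ℝ := (μ Set.univ).toReal with hVdef
  have hV : 0 < V := ENNReal.toReal_pos hpos.ne' hfin.ne
  set I : ℝ := ∫ x, H x ∂μ with hIdef
  set J : ℝ := ∫ x, (H x) ^ 2 ∂μ with hJdef
  have hInt : Integrable H μ := hH.integrable one_le_two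
  set m : ℝ := I / V with hmdef
  have hHm : MemLp (fun x => H x - m) 2 μ := hH.sub (memLp_const m)
  have hg : Integrable (fun x => (H x - m) ^ 2) μ := hHm.integrable_sq
  have hInt2 : Integrable (fun x => (H x) ^ 2) μ := hH.integrable_sq
  have hexp : ∫ x, (H x - m) ^ 2 ∂μ = J - I ^ 2 / V := by
    have h1 : ∫ x, (H x - m) ^ 2 ∂μ
        = ∫ x, ((H x) ^ 2 - (2 * m) * H x + m ^ 2) ∂μ := by
      congr 1; funext x; ring
    rw [h1, integral_add (by exact (hInt2.sub (hInt.const_mul (2 * m)))) (integrable_const _),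
      integral_sub hInt2 (hInt.const_mul (2 * m)), integral_const_mul, integral_const]
    simp only [smul_eq_mul, measureReal_def, ← hIdef, ← hJdef, ← hVdef]
    rw [hmdef]
    field_simp
    ring
  have hnn : 0 ≤ ∫ x, (H x - m) ^ 2 ∂μ :=
    integral_nonneg fun x => sq_nonneg _
  have hzero : (∫ x, (H x - m) ^ 2 ∂μ) = 0 ↔ H =ᵐ[μ] fun _ => m := by
    rw [integral_eq_zero_iff_of_nonneg (fun x => sq_nonneg _) hg]
    constructor
    · intro h
      filter_upwards [h] with x hx
      have h2 : (H x - m) ^ 2 = 0 := hx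
      have := pow_eq_zero_iff (n := 2) (by norm_num) |>.mp h2
      linarith
    · intro h
      filter_upwards [h] with x hx
      simp [hx]
  set D : ℝ := I ^ 2 / V with hDdef
  have hD : 0 ≤ D := div_nonneg (sq_nonneg _) hV.le
  have hDeq : D = 0 ↔ I = 0 := by
    rw [hDdef, div_eq_zero_iff]
    constructor
    · rintro (h | h)
      · exact pow_eq_zero_iff (n := 2) (by norm_num) |>.mp h
      · exact absurd h hV.ne'
    · intro h; left; rw [h]; ring
  have hE : (4 * (c H) ^ 2 - 3 * c (fun x => (H x) ^ 2)) * V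
      = 4 * D - 3 * J := by
    rw [hc, hc]
    simp only [← hIdef, ← hJdef, ← hVdef, hDdef]
    field_simp
  have hvar : 0 ≤ J - D := hexp ▸ hnn
  refine ⟨?_, ?_, ?_, ?_⟩
  · rw [hE]; linarith
  · rw [hE]; linarith
  · rw [hE]
    constructor
    · intro h
      exact hDeq.mp (by linarith)
    · intro h
      have : D = 0 := hDeq.mpr h
      rw [this]; ring
  · rw [hE]
    constructor
    · intro h
      have h0 : (∫ x, (H x - m) ^ 2 ∂μ) = 0 := by rw [hexp]; linarith
      exact ⟨m, hzero.mp h0⟩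
    · rintro ⟨a, ha⟩
      have hIa : I = a * V := by
        rw [hIdef, integral_congr_ae ha, integral_const, smul_eq_mul, measureReal_def, ← hVdef]; ring
      have hJa : J = a ^ 2 * V := by
        have h2 : (fun x => (H x) ^ 2) =ᵐ[μ] fun _ => a ^ 2 := by
          filter_upwards [ha] with x hx; simp [hx]
        rw [hJdef, integral_congr_ae h2, integral_const, smul_eq_mul, measureReal_def, ← hVdef]; ring
      have hD2 : D = a ^ 2 * V := by
        rw [hDdef, hIa]; field_simp
      rw [hD2, hJa]; ring
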